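/- The complete graph K_4 has uniform mixing at time t = π/4: every entry of exp(-i·A(K_4)·(π/4)) has modulus 1/2. -/

import Mathlib

open Matrix

noncomputable section Stmt12Aux

/-- time parameter `i·π/4` -/
def t12 : ℂ := Complex.I * ((Real.pi / 4 : ℝ) : ℂ)

/-- Hadamard matrix divided by 2; it is an involution. -/
def H12 : Matrix (Fin 4) (Fin 4) ℂ :=
  (1/2 : ℂ) • !![1,1,1,1; 1,-1,1,-1; 1,1,-1,-1; 1,-1,-1,1]

lemma H12_mul_H12 : H12 * H12 = 1 := by
  ext i j
  fin_cases i <;> fin_cases j <;>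
    simp [H12, Matrix.mul_apply, Fin.sum_univ_four, Matrix.one_apply, Matrix.cons_val_two, Matrix.cons_val_three, Matrix.vecHead, Matrix.vecTail] <;> ring

lemma H12_inv : H12⁻¹ = H12 := Matrix.inv_eq_right_inv H12_mul_H12

lemma H12_isUnit : IsUnit H12 :=
  (Matrix.isUnit_iff_isUnit_det _).mpr (Matrix.isUnit_det_of_right_inverse H12_mul_H12)

/-- diagonal part -/
def D12 : Matrix (Fin 4) (Fin 4) ℂ :=
  Matrix.diagonal ![(-3) * t12, t12, t12, t12]

lemma conj_eq :
    (-(Complex.I * ((Real.pi / 4 : ℝ) : ℂ))) •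
      (Matrix.of fun i j : Fin 4 => if i = j then (0 : ℂ) else 1) = H12 * D12 * H12 := by
  ext i j
  fin_cases i <;> fin_cases j <;>
    simp [H12, D12, t12, Matrix.mul_apply, Fin.sum_univ_four, Matrix.vecMul, dotProduct, Matrix.diagonal_apply, Matrix.cons_val_two, Matrix.cons_val_three, Matrix.vecHead, Matrix.vecTail] <;> ring

lemma exp_t12_key : Complex.exp (-(3 * t12)) = - Complex.exp t12 := by
  have h4 : -(3 * t12) = t12 + (- (Real.pi * Complex.I)) := by
    simp only [t12]; push_cast; ring
  rw [h4, Complex.exp_add, Complex.exp_neg, Complex.exp_pi_mul_I]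
  ring

lemma abs_exp_t12 : ‖Complex.exp t12‖ = 1 := by
  rw [Complex.norm_exp]; simp [t12]

theorem stmt12 :
    ∀ a b : Fin 4,
      ‖(NormedSpace.exp ((-(Complex.I * ((Real.pi / 4 : ℝ) : ℂ))) •
        (Matrix.of fun i j : Fin 4 => if i = j then (0 : ℂ) else 1))) a b‖ = 1 / 2 := by
  have hexp : NormedSpace.exp ((-(Complex.I * ((Real.pi / 4 : ℝ) : ℂ))) •
      (Matrix.of fun i j : Fin 4 => if i = j then (0 : ℂ) else 1))
      = H12 * (Matrix.diagonal (NormedSpace.exp ∘ ![(-3) * t12, t12, t12, t12])) * H12 := by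
    rw [conj_eq]
    have h : H12 * D12 * H12 = H12 * D12 * H12⁻¹ := by rw [H12_inv]
    rw [h, Matrix.exp_conj H12 D12 H12_isUnit, H12_inv, D12, Matrix.exp_diagonal, Pi.exp_def]
    rfl
  intro a b
  rw [hexp]
  fin_cases a <;> fin_cases b <;>
    simp [H12, Matrix.mul_apply, Fin.sum_univ_four, Matrix.diagonal_apply, Matrix.vecMul,
      dotProduct, Matrix.cons_val_two, Matrix.cons_val_three, Matrix.vecHead, Matrix.vecTail, Function.comp, ← Complex.exp_eq_exp_ℂ, exp_t12_key] <;>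
    ring_nf <;>
    simp [_root_.map_mul, _root_.map_neg, abs_exp_t12]

end Stmt12Aux
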